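/- Let R = k{τ} with k = F_{q^n}, and let π = τ^n, so A' = F_q[π] is the center of R. For any nonzero u ∈ R, there exists a nonzero central left multiple of u, i.e., a nonzero f ∈ A' with f = wu for some w ∈ R; moreover, there is a unique monic such f of minimal degree in π, and every central left multiple of u is divisible (in A') by this minimal one. -/

import Mathlib

/-- The twisted polynomial ring `R = k{τ}` over `k = F_{q^n}`, axiomatized. -/
structure TwistedPolynomialRing (q : ℕ) (k : Type) [Field k] (R : Type) [Ring R] [Module k R] where
  ι : k →+* R
  τ : R
  tau_comm : ∀ a : k, τ * ι a = ι (a ^ q) * τ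
  smul_def : ∀ (a : k) (r : R), a • r = ι a * r
  basis : Module.Basis ℕ k R
  basis_eq : ∀ i : ℕ, basis i = τ ^ i

variable {q : ℕ} {k R : Type} [Field k] [Ring R] [Module k R]

/-- The τ-degree of a twisted polynomial (`0` for the zero polynomial). -/
noncomputable def TwistedPolynomialRing.degτ (T : TwistedPolynomialRing q k R) (f : R) : ℕ :=
  (T.basis.repr f).support.sup id

/-- `f` is a central left multiple of `u`: `f` lies in the center `A' = F_q[π]`
(`π = τ^n`) of `R = k{τ}`, `f ≠ 0`, and `f = w·u` for some `w ∈ R`. -/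
def TwistedPolynomialRing.IsCLM (T : TwistedPolynomialRing q k R) (u f : R) : Prop :=
  f ∈ Subring.center R ∧ f ≠ 0 ∧ ∃ w : R, f = w * u

/-- `f` is monic (leading τ-coefficient `1`). -/
noncomputable def TwistedPolynomialRing.IsMonic (T : TwistedPolynomialRing q k R) (f : R) : Prop :=
  T.basis.repr f (T.degτ f) = 1

namespace TwistedPolynomialRing
variable (T : TwistedPolynomialRing q k R)

lemma repr_tau_pow (i : ℕ) : T.basis.repr (T.τ ^ i) = Finsupp.single i 1 := by
  rw [← T.basis_eq, T.basis.repr_self]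

lemma tau_pow_comm (m : ℕ) (a : k) : T.τ ^ m * T.ι a = T.ι (a ^ q ^ m) * T.τ ^ m := by
  induction m generalizing a with
  | zero => simp
  | succ m ih =>
    rw [pow_succ, mul_assoc, T.tau_comm, ← mul_assoc, ih (a ^ q), ← pow_mul, ← pow_succ',
      mul_assoc, ← pow_succ]

lemma expand (f : R) : (T.basis.repr f).sum (fun i c => c • T.τ ^ i) = f := by
  conv_rhs => rw [← T.basis.linearCombination_repr f]
  rw [Finsupp.linearCombination_apply]
  exact Finsupp.sum_congr fun i _ => by rw [T.basis_eq]

lemma tau_pow_mul_smul (m i : ℕ) (c : k) :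
    T.τ ^ m * (c • T.τ ^ i) = (c ^ q ^ m) • T.τ ^ (m + i) := by
  rw [T.smul_def, T.smul_def, ← mul_assoc, T.tau_pow_comm, mul_assoc, ← pow_add]

lemma repr_tau_pow_mul (hq0 : q ≠ 0) (m : ℕ) (f : R) (j : ℕ) :
    T.basis.repr (T.τ ^ m * f) j =
      if m ≤ j then (T.basis.repr f (j - m)) ^ q ^ m else 0 := by
  conv_lhs => rw [← T.expand f]
  rw [Finsupp.sum, Finset.mul_sum]
  simp_rw [T.tau_pow_mul_smul, map_sum, map_smul, T.repr_tau_pow, Finsupp.coe_finset_sum,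
    Finset.sum_apply, Finsupp.smul_apply, Finsupp.single_apply, smul_eq_mul, mul_ite, mul_one,
    mul_zero]
  by_cases hmj : m ≤ j
  · simp only [hmj, if_true]
    have : ∀ i, (m + i = j) = (j - m = i) := by intro i; apply propext; omega
    simp_rw [this]
    rw [Finset.sum_ite_eq (T.basis.repr f).support (j - m) (fun i => T.basis.repr f i ^ q ^ m)]
    by_cases hmem : j - m ∈ (T.basis.repr f).support
    · simp [hmem]
    · simp only [hmem, if_false]
      rw [Finsupp.notMem_support_iff.mp hmem, zero_pow]
      positivity
  · simp only [hmj, if_false]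
    apply Finset.sum_eq_zero
    intro i _
    rw [if_neg]; omega

lemma repr_mul_iota (f : R) (b : k) (j : ℕ) :
    T.basis.repr (f * T.ι b) j = T.basis.repr f j * b ^ q ^ j := by
  conv_lhs => rw [← T.expand f]
  rw [Finsupp.sum, Finset.sum_mul]
  have key : ∀ i (c : k), (c • T.τ ^ i) * T.ι b = (c * b ^ q ^ i) • T.τ ^ i := by
    intro i c
    rw [T.smul_def, T.smul_def, mul_assoc, T.tau_pow_comm, ← mul_assoc, ← map_mul]
  simp_rw [key, map_sum, map_smul, T.repr_tau_pow, Finsupp.coe_finset_sum, Finset.sum_apply,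
    Finsupp.smul_apply, Finsupp.single_apply, smul_eq_mul, mul_ite, mul_one, mul_zero]
  rw [Finset.sum_ite_eq' (T.basis.repr f).support j (fun i => T.basis.repr f i * b ^ q ^ i)]
  by_cases hmem : j ∈ (T.basis.repr f).support
  · simp [hmem]
  · simp only [hmem, if_false]
    rw [Finsupp.notMem_support_iff.mp hmem, zero_mul]

lemma repr_mul_tau (f : R) (j : ℕ) :
    T.basis.repr (f * T.τ) j = if 1 ≤ j then T.basis.repr f (j - 1) else 0 := by
  conv_lhs => rw [← T.expand f]
  rw [Finsupp.sum, Finset.sum_mul]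
  have key : ∀ i (c : k), (c • T.τ ^ i) * T.τ = c • T.τ ^ (i + 1) := by
    intro i c
    rw [T.smul_def, T.smul_def, mul_assoc, ← pow_succ]
  simp_rw [key, map_sum, map_smul, T.repr_tau_pow, Finsupp.coe_finset_sum, Finset.sum_apply,
    Finsupp.smul_apply, Finsupp.single_apply, smul_eq_mul, mul_ite, mul_one, mul_zero]
  by_cases h1j : 1 ≤ j
  · simp only [h1j, if_true]
    have : ∀ i, (i + 1 = j) = (j - 1 = i) := by intro i; apply propext; omega
    simp_rw [this]
    rw [Finset.sum_ite_eq (T.basis.repr f).support (j - 1) (fun i => T.basis.repr f i)]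
    by_cases hmem : j - 1 ∈ (T.basis.repr f).support
    · simp [hmem]
    · simp only [hmem, if_false]
      rw [Finsupp.notMem_support_iff.mp hmem]
  · simp only [h1j, if_false]
    apply Finset.sum_eq_zero
    intro i _
    rw [if_neg]; omega

lemma iota_mul (b : k) (f : R) : T.ι b * f = b • f := (T.smul_def b f).symm

end TwistedPolynomialRing

namespace TwistedPolynomialRing
variable (T : TwistedPolynomialRing q k R)

lemma repr_degτ_ne_zero {f : R} (hf : f ≠ 0) : T.basis.repr f (T.degτ f) ≠ 0 := by
  have hne : (T.basis.repr f).support.Nonempty := by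
    rw [Finsupp.support_nonempty_iff]
    simpa using hf
  obtain ⟨i, hi, he⟩ := Finset.exists_mem_eq_sup (T.basis.repr f).support hne id
  rw [degτ, he]
  exact Finsupp.mem_support_iff.mp hi

lemma repr_eq_zero_of_lt {f : R} {j : ℕ} (h : T.degτ f < j) : T.basis.repr f j = 0 := by
  by_contra hc
  have h2 := Finset.le_sup (f := id) (Finsupp.mem_support_iff.mpr hc)
  rw [degτ] at h
  simp only [id] at h2
  omega

lemma degτ_lt_of {f : R} {m : ℕ} (hm : 0 < m) (h : ∀ j, m ≤ j → T.basis.repr f j = 0) :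
    T.degτ f < m := by
  rw [degτ, Finset.sup_lt_iff (by simpa using hm)]
  intro b hb
  simp only [id]
  by_contra hc
  exact Finsupp.mem_support_iff.mp hb (h b (by omega))

/-- Centrality criterion. -/
lemma mem_center_of {x : R} (h1 : x * T.τ = T.τ * x) (h2 : ∀ b : k, x * T.ι b = T.ι b * x) :
    x ∈ Subring.center R := by
  have hτ : ∀ i, x * T.τ ^ i = T.τ ^ i * x := by
    intro i
    induction i with
    | zero => simp
    | succ i ih => rw [pow_succ, ← mul_assoc, ih, mul_assoc, h1, ← mul_assoc]
  rw [Subring.mem_center_iff]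
  intro r
  conv_lhs => rw [← T.expand r]
  conv_rhs => rw [← T.expand r]
  rw [Finsupp.sum, Finset.sum_mul, Finset.mul_sum]
  refine Finset.sum_congr rfl fun i _ => ?_
  rw [T.smul_def, mul_assoc, ← hτ, ← mul_assoc, ← h2, mul_assoc]

lemma iota_mem_center {c : k} (hc : c ^ q = c) : T.ι c ∈ Subring.center R := by
  refine T.mem_center_of ?_ fun b => by rw [← map_mul, ← map_mul, mul_comm]
  rw [← pow_one T.τ, T.tau_pow_comm, pow_one, pow_one, hc]

lemma pow_q_pow_eq {c : k} (hc : c ^ q = c) (m : ℕ) : c ^ q ^ m = c := by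
  induction m with
  | zero => simp
  | succ m ih => rw [pow_succ', pow_mul, hc, ih]

lemma pi_mem_center {n : ℕ} [Fintype k] (hk : Fintype.card k = q ^ n) :
    T.τ ^ n ∈ Subring.center R := by
  refine T.mem_center_of (by rw [← pow_succ, ← pow_succ']) fun b => ?_
  rw [T.tau_pow_comm]
  congr 2
  rw [← hk]
  exact FiniteField.pow_card b

/-- coefficients of central elements are fixed by Frobenius. -/
lemma coeff_pow_q_of_central (hq0 : q ≠ 0) {f : R} (hf : f ∈ Subring.center R) (j : ℕ) :
    T.basis.repr f j ^ q = T.basis.repr f j := by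
  have h := Subring.mem_center_iff.mp hf T.τ
  have h2 : T.basis.repr (T.τ ^ 1 * f) (j + 1) = T.basis.repr (f * T.τ) (j + 1) := by
    rw [pow_one, h]
  rw [T.repr_tau_pow_mul hq0, T.repr_mul_tau] at h2
  simpa using h2

end TwistedPolynomialRing

lemma nat_dvd_of_pow_sub_one_dvd {q n j : ℕ} (hq2 : 2 ≤ q) (hn : 0 < n)
    (h : q ^ n - 1 ∣ q ^ j - 1) : n ∣ j := by
  have hc1 : 1 ≤ q ^ n := Nat.one_le_pow _ _ (by omega)
  have hc2 : 1 ≤ q ^ j := Nat.one_le_pow _ _ (by omega)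
  have hq2' : (2:ℤ) ≤ (q:ℤ) := by exact_mod_cast hq2
  have hz : ((q : ℤ) ^ n - 1) ∣ ((q : ℤ) ^ j - 1) := by
    have h5 := Int.natCast_dvd_natCast.mpr h
    rwa [Nat.cast_sub hc1, Nat.cast_sub hc2, Nat.cast_pow, Nat.cast_pow, Nat.cast_one] at h5
  set r := j % n with hr
  have hrn : r < n := Nat.mod_lt _ hn
  have hjr : (q : ℤ) ^ j - 1 =
      ((q:ℤ)^n) ^ (j / n) * ((q:ℤ) ^ r - 1) + (((q:ℤ)^n) ^ (j / n) - 1) := by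
    have h6 : (q : ℤ) ^ j = ((q:ℤ)^n) ^ (j / n) * (q:ℤ) ^ r := by
      rw [← pow_mul, ← pow_add]
      congr 1
      exact (Nat.div_add_mod j n).symm
    rw [h6]; ring
  have hd1 : ((q : ℤ) ^ n - 1) ∣ (((q:ℤ)^n) ^ (j / n) - 1) := by
    simpa using sub_dvd_pow_sub_pow ((q:ℤ)^n) 1 (j / n)
  have hd2 : ((q : ℤ) ^ n - 1) ∣ ((q:ℤ)^n) ^ (j / n) * ((q:ℤ) ^ r - 1) := by
    have h4 : (q:ℤ)^j - 1 - (((q:ℤ)^n)^(j/n) - 1) = ((q:ℤ)^n)^(j/n) * ((q:ℤ)^r - 1) := by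
      rw [hjr]; ring
    have h7 := dvd_sub hz hd1
    rwa [h4] at h7
  have hd3 : ((q : ℤ) ^ n - 1) ∣ ((q:ℤ) ^ r - 1) := by
    refine IsCoprime.dvd_of_dvd_mul_left ?_ hd2
    exact (IsCoprime.pow_right ⟨-1, 1, by ring⟩)
  have hrz : r = 0 := by
    by_contra hr0
    have h1 : (0:ℤ) < (q:ℤ) ^ r - 1 := by
      have h8 : (2:ℤ) ≤ (q:ℤ) ^ r := le_trans hq2' (le_self_pow₀ (by linarith) hr0)
      linarith
    have h2 := Int.le_of_dvd h1 hd3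
    have h3 : (q:ℤ) ^ r < (q:ℤ) ^ n := pow_lt_pow_right₀ (by linarith) hrn
    linarith
  omega

namespace TwistedPolynomialRing
variable (T : TwistedPolynomialRing q k R)

lemma coeff_eq_zero_of_central {n : ℕ} [Fintype k] (hq2 : 2 ≤ q) (hn : 0 < n)
    (hk : Fintype.card k = q ^ n) {f : R} (hf : f ∈ Subring.center R) {j : ℕ}
    (hj : ¬ n ∣ j) : T.basis.repr f j = 0 := by
  by_contra hc
  apply hj
  have hb : ∀ b : k, b ^ q ^ j = b := by
    intro b
    have h := Subring.mem_center_iff.mp hf (T.ι b)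
    have h2 := congrArg (fun x => T.basis.repr x j) h
    rw [T.iota_mul, map_smul, T.repr_mul_iota, Finsupp.smul_apply, smul_eq_mul,
      mul_comm b (T.basis.repr f j)] at h2
    exact (mul_left_cancel₀ hc h2).symm
  obtain ⟨g, hg⟩ := IsCyclic.exists_generator (α := kˣ)
  have horder : orderOf g = q ^ n - 1 := by
    rw [orderOf_eq_card_of_forall_mem_zpowers hg, Nat.card_units,
      Nat.card_eq_fintype_card, hk]
  have hq1 : 1 ≤ q ^ j := Nat.one_le_pow _ _ (by omega)
  have hgp : g ^ (q ^ j - 1) = 1 := by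
    have hgq : g ^ q ^ j = g := by
      ext
      push_cast
      exact hb _
    have h3 : g ^ (q ^ j - 1) * g = 1 * g := by
      rw [one_mul, ← pow_succ]
      rw [Nat.sub_add_cancel hq1, hgq]
    exact mul_right_cancel h3
  have hdvd : q ^ n - 1 ∣ q ^ j - 1 := horder ▸ orderOf_dvd_of_pow_eq_one hgp
  exact nat_dvd_of_pow_sub_one_dvd hq2 hn hdvd

lemma div_aux (hq0 : q ≠ 0) {u : R} (hu : u ≠ 0) :
    ∀ (m : ℕ) (r : R), (∀ j, T.degτ u + m ≤ j → T.basis.repr r j = 0) →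
      ∃ w : R, ∀ j, T.degτ u ≤ j → T.basis.repr (r - w * u) j = 0 := by
  intro m
  induction m with
  | zero =>
    intro r hr
    exact ⟨0, fun j hj => by simpa using hr j (by omega)⟩
  | succ m ih =>
    intro r hr
    set d := T.degτ u with hd
    set c := T.basis.repr r (d + m) * ((T.basis.repr u d) ^ q ^ m)⁻¹ with hc
    set t : R := c • (T.τ ^ m * u) with ht
    have hx : (T.basis.repr u d) ^ q ^ m ≠ 0 := pow_ne_zero _ (T.repr_degτ_ne_zero hu)
    have hrt : ∀ j, d + m ≤ j → T.basis.repr (r - t) j = 0 := by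
      intro j hj
      rw [map_sub, Finsupp.sub_apply, ht, map_smul, Finsupp.smul_apply, smul_eq_mul,
        T.repr_tau_pow_mul hq0, if_pos (by omega)]
      rcases eq_or_lt_of_le hj with he | hlt
      · have hjm : j - m = d := by omega
        rw [hjm, ← he, hc, mul_assoc, inv_mul_cancel₀ hx, mul_one, sub_self]
      · rw [hr j (by omega), T.repr_eq_zero_of_lt (f := u) (by omega), zero_pow (by positivity),
          mul_zero, sub_zero]
    obtain ⟨w', hw'⟩ := ih (r - t) hrt
    refine ⟨w' + T.ι c * T.τ ^ m, fun j hj => ?_⟩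
    have heq : r - (w' + T.ι c * T.τ ^ m) * u = (r - t) - w' * u := by
      rw [add_mul, mul_assoc, ← T.smul_def, ht]
      abel
    rw [heq]
    exact hw' j hj

lemma central_div {n : ℕ} [Fintype k] (hq2 : 2 ≤ q) (hn : 0 < n)
    (hk : Fintype.card k = q ^ n)
    {f : R} (hfc : f ∈ Subring.center R) (hf0 : f ≠ 0)
    (hmonic : T.basis.repr f (T.degτ f) = 1) :
    ∀ (m : ℕ) (g : R), g ∈ Subring.center R →
      (∀ j, T.degτ f + m ≤ j → T.basis.repr g j = 0) →
      ∃ h ∈ Subring.center R, ∀ j, T.degτ f ≤ j → T.basis.repr (g - h * f) j = 0 := by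
  have hq0 : q ≠ 0 := by omega
  have hndf : n ∣ T.degτ f := by
    by_contra hnd
    exact T.repr_degτ_ne_zero hf0 (T.coeff_eq_zero_of_central hq2 hn hk hfc hnd)
  intro m
  induction m with
  | zero =>
    intro g hg hgr
    exact ⟨0, Subring.zero_mem _, fun j hj => by simpa using hgr j (by omega)⟩
  | succ m ih =>
    intro g hgc hgr
    set d := T.degτ f with hd
    by_cases hc0 : T.basis.repr g (d + m) = 0
    · apply ih g hgc
      intro j hj
      rcases eq_or_lt_of_le hj with he | hlt
      · rw [← he]; exact hc0
      · exact hgr j (by omega)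
    · have hdvd : n ∣ d + m := by
        by_contra hx
        exact hc0 (T.coeff_eq_zero_of_central hq2 hn hk hgc hx)
      have hnm : n ∣ m := by
        have := Nat.dvd_sub hdvd hndf
        simpa using this
      set c := T.basis.repr g (d + m) with hcdef
      have hcq : c ^ q = c := T.coeff_pow_q_of_central hq0 hgc _
      have hτm : T.τ ^ m ∈ Subring.center R := by
        obtain ⟨s, rfl⟩ := hnm
        rw [pow_mul]
        exact Subring.pow_mem _ (T.pi_mem_center hk) s
      have htc : (T.ι c * T.τ ^ m) ∈ Subring.center R :=
        Subring.mul_mem _ (T.iota_mem_center hcq) hτm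
      set t : R := c • (T.τ ^ m * f) with ht
      have htc2 : t ∈ Subring.center R := by
        have : t = (T.ι c * T.τ ^ m) * f := by
          rw [ht, T.smul_def, mul_assoc]
        rw [this]
        exact Subring.mul_mem _ htc hfc
      have hgt : ∀ j, d + m ≤ j → T.basis.repr (g - t) j = 0 := by
        intro j hj
        rw [map_sub, Finsupp.sub_apply, ht, map_smul, Finsupp.smul_apply, smul_eq_mul,
          T.repr_tau_pow_mul hq0, if_pos (by omega)]
        rcases eq_or_lt_of_le hj with he | hlt
        · have hjm : j - m = d := by omega
          rw [hjm, hmonic, one_pow, mul_one, ← he, ← hcdef, sub_self]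
        · rw [hgr j (by omega), T.repr_eq_zero_of_lt (f := f) (by omega),
            zero_pow (by positivity), mul_zero, sub_zero]
      obtain ⟨h', hh'c, hh'⟩ := ih (g - t) (Subring.sub_mem _ hgc htc2) hgt
      refine ⟨h' + T.ι c * T.τ ^ m, Subring.add_mem _ hh'c htc, fun j hj => ?_⟩
      have heq : g - (h' + T.ι c * T.τ ^ m) * f = (g - t) - h' * f := by
        rw [add_mul, mul_assoc, ← T.smul_def, ht]
        abel
      rw [heq]
      exact hh' j hj

end TwistedPolynomialRing

/-- **Existence and uniqueness of the minimal central left multiple.**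
Let `R = k{τ}` with `k = F_{q^n}`, `π = τ^n`, so `A' = F_q[π]` is the center of `R`.
For any nonzero `u ∈ R` there exists a nonzero central left multiple of `u`;
moreover there is a unique monic central left multiple `f` of minimal degree,
and every central left multiple of `u` is divisible in `A'` by this minimal one. -/
theorem minimal_central_left_multiple
    {n : ℕ} (hn : 0 < n)
    {F : Type} [Field F] [Fintype F] (hq : Fintype.card F = q)
    [Fintype k] [Algebra F k] (hk : Fintype.card k = q ^ n)
    (T : TwistedPolynomialRing q k R)
    (u : R) (hu : u ≠ 0) :
    (∃ f : R, T.IsCLM u f) ∧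
    (∃! f : R, T.IsCLM u f ∧ T.IsMonic f ∧
      (∀ g : R, T.IsCLM u g → T.degτ f ≤ T.degτ g) ∧
      (∀ g : R, T.IsCLM u g → ∃ h ∈ Subring.center R, g = h * f)) := by
  classical
  have hq2 : 2 ≤ q := hq ▸ Fintype.one_lt_card
  have hq0 : q ≠ 0 := by omega
  -- existence of a central left multiple
  have hex : ∃ f : R, T.IsCLM u f := by
    have hrem : ∀ i : ℕ, ∃ w : R,
        ∀ j, T.degτ u ≤ j → T.basis.repr ((T.τ ^ n) ^ i - w * u) j = 0 := by
      intro i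
      apply T.div_aux hq0 hu (n * i + 1)
      intro j hj
      rw [← pow_mul, T.repr_tau_pow, Finsupp.single_apply, if_neg (by omega)]
    choose w hw using hrem
    obtain ⟨a, b, hab, heq⟩ := Finite.exists_ne_map_eq_of_infinite
      (fun i : ℕ => fun t : Fin (T.degτ u) =>
        T.basis.repr ((T.τ ^ n) ^ i - w i * u) (t : ℕ))
    have hsab : (T.τ ^ n) ^ a - w a * u = (T.τ ^ n) ^ b - w b * u := by
      apply T.basis.repr.injective
      ext j
      by_cases hjd : j < T.degτ u
      · exact congrFun heq ⟨j, hjd⟩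
      · rw [hw a j (by omega), hw b j (by omega)]
    refine ⟨(T.τ ^ n) ^ a - (T.τ ^ n) ^ b,
      Subring.sub_mem _ (Subring.pow_mem _ (T.pi_mem_center hk) a)
        (Subring.pow_mem _ (T.pi_mem_center hk) b), ?_, ⟨w a - w b, ?_⟩⟩
    · intro h0
      have h1 : T.basis.repr ((T.τ ^ n) ^ a - (T.τ ^ n) ^ b) (n * a) = 1 := by
        rw [map_sub, Finsupp.sub_apply, ← pow_mul, ← pow_mul, T.repr_tau_pow, T.repr_tau_pow,
          Finsupp.single_apply, Finsupp.single_apply, if_pos rfl,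
          if_neg (fun hcon => hab (Nat.eq_of_mul_eq_mul_left hn hcon).symm), sub_zero]
      rw [h0] at h1
      simp at h1
    · have h2 := sub_eq_sub_iff_sub_eq_sub.mp hsab
      rw [h2, ← sub_mul]
  refine ⟨hex, ?_⟩
  -- minimal monic central left multiple
  have hP : ∃ m, ∃ g : R, T.IsCLM u g ∧ T.degτ g = m := by
    obtain ⟨f, hf⟩ := hex
    exact ⟨T.degτ f, f, hf, rfl⟩
  obtain ⟨g₀, hg₀, hg₀d⟩ := Nat.find_spec hP
  obtain ⟨hg₀c, hg₀0, w₀, hw₀⟩ := hg₀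
  set c := T.basis.repr g₀ (T.degτ g₀) with hcdef
  have hc0 : c ≠ 0 := T.repr_degτ_ne_zero hg₀0
  have hcq : c ^ q = c := T.coeff_pow_q_of_central hq0 hg₀c _
  have hciq : (c⁻¹) ^ q = c⁻¹ := by rw [inv_pow, hcq]
  set f := c⁻¹ • g₀ with hfdef
  have hf0 : f ≠ 0 := smul_ne_zero (inv_ne_zero hc0) hg₀0
  have hreprf : T.basis.repr f = c⁻¹ • T.basis.repr g₀ := map_smul _ _ _
  have hdegf : T.degτ f = T.degτ g₀ := by
    rw [TwistedPolynomialRing.degτ, TwistedPolynomialRing.degτ, hreprf,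
      Finsupp.support_smul_eq (inv_ne_zero hc0)]
  have hfc : f ∈ Subring.center R := by
    rw [hfdef, T.smul_def]
    exact Subring.mul_mem _ (T.iota_mem_center hciq) hg₀c
  have hfRu : ∃ wf : R, f = wf * u :=
    ⟨T.ι c⁻¹ * w₀, by rw [hfdef, T.smul_def, hw₀, mul_assoc]⟩
  have hfCLM : T.IsCLM u f := ⟨hfc, hf0, hfRu⟩
  have hfmonic : T.IsMonic f := by
    show T.basis.repr f (T.degτ f) = 1
    rw [hdegf, hreprf, Finsupp.smul_apply, ← hcdef, smul_eq_mul, inv_mul_cancel₀ hc0]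
  have hmin : ∀ g : R, T.IsCLM u g → T.degτ f ≤ T.degτ g := by
    intro g hg
    rw [hdegf, hg₀d]
    exact Nat.find_min' hP ⟨g, hg, rfl⟩
  have hdiv : ∀ g : R, T.IsCLM u g → ∃ h ∈ Subring.center R, g = h * f := by
    intro g hg
    obtain ⟨hgc, hg0, wg, hwg⟩ := hg
    obtain ⟨h, hhc, hh⟩ := T.central_div hq2 hn hk hfc hf0 hfmonic (T.degτ g + 1) g hgc
      (fun j hj => T.repr_eq_zero_of_lt (by omega))
    refine ⟨h, hhc, ?_⟩
    have hs0 : g - h * f = 0 := by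
      by_cases hdf : 0 < T.degτ f
      · by_contra hs
        have hsCLM : T.IsCLM u (g - h * f) := by
          refine ⟨Subring.sub_mem _ hgc (Subring.mul_mem _ hhc hfc), hs, ?_⟩
          obtain ⟨wf, hwf⟩ := hfRu
          exact ⟨wg - h * wf, by rw [hwg, hwf, sub_mul, mul_assoc]⟩
        have h1 := hmin _ hsCLM
        have h2 : T.degτ (g - h * f) < T.degτ f := T.degτ_lt_of hdf hh
        omega
      · have hz : T.basis.repr (g - h * f) = 0 := Finsupp.ext fun j => hh j (by omega)
        exact (LinearEquiv.map_eq_zero_iff _).mp hz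
    rw [sub_eq_zero] at hs0
    exact hs0
  refine ⟨f, ⟨hfCLM, hfmonic, hmin, hdiv⟩, ?_⟩
  rintro y ⟨hyCLM, hymonic, hymin, _⟩
  have hdy : T.degτ y = T.degτ f := le_antisymm (hymin f hfCLM) (hmin y hyCLM)
  apply T.basis.repr.injective
  ext j
  by_contra hne
  rcases lt_trichotomy j (T.degτ f) with hlt | heqj | hgt
  · have hz0 : y - f ≠ 0 := by
      intro h0
      rw [sub_eq_zero] at h0
      exact hne (by rw [h0])
    have hvan : ∀ j', T.degτ f ≤ j' → T.basis.repr (y - f) j' = 0 := by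
      intro j' hj'
      rw [map_sub, Finsupp.sub_apply]
      rcases eq_or_lt_of_le hj' with he | hlt'
      · have hy1 : T.basis.repr y j' = 1 := by
          have := hymonic
          rw [TwistedPolynomialRing.IsMonic, hdy, he] at this
          exact this
        have hf1 : T.basis.repr f j' = 1 := by
          have := hfmonic
          rw [TwistedPolynomialRing.IsMonic, he] at this
          exact this
        rw [hy1, hf1, sub_self]
      · rw [T.repr_eq_zero_of_lt (f := y) (by rw [hdy]; omega),
          T.repr_eq_zero_of_lt (f := f) (by omega), sub_self]
    have hzCLM : T.IsCLM u (y - f) := by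
      refine ⟨Subring.sub_mem _ hyCLM.1 hfc, hz0, ?_⟩
      obtain ⟨wy, hwy⟩ := hyCLM.2.2
      obtain ⟨wf, hwf⟩ := hfRu
      exact ⟨wy - wf, by rw [hwy, hwf, sub_mul]⟩
    have h1 := hmin _ hzCLM
    have h2 : T.degτ (y - f) < T.degτ f := T.degτ_lt_of (by omega) hvan
    omega
  · apply hne
    have hy1 : T.basis.repr y j = 1 := by
      have := hymonic
      rw [TwistedPolynomialRing.IsMonic, hdy, ← heqj] at this
      exact this
    have hf1 : T.basis.repr f j = 1 := by
      have := hfmonic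
      rw [TwistedPolynomialRing.IsMonic, ← heqj] at this
      exact this
    rw [hy1, hf1]
  · apply hne
    rw [T.repr_eq_zero_of_lt (f := y) (by rw [hdy]; omega),
      T.repr_eq_zero_of_lt (f := f) (by omega)]
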